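/- Let n = 2m, M_n be the maximum of symmetric simple random walk up to time n, N_n = ⌊(M_n+1)/2⌋, W = M_n/sqrt(n) and V = 2N_n/sqrt(n). Then the Kolmogorov distance satisfies d_K(V, W) = sup_z |P(V ≤ z) - P(W ≤ z)| ≤ sqrt(2/π)/sqrt(n), and the Wasserstein distance satisfies d_W(V, W) ≤ 1/sqrt(n). -/

import Mathlib

open MeasureTheory

/-- Uniform probability measure on the `2m` independent ±1 steps (encoded as Booleans). -/
noncomputable def walkP (m : ℕ) : Measure (Fin (2*m) → Bool) :=
  (PMF.uniformOfFintype (Fin (2*m) → Bool)).toMeasure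

/-- Position of the simple random walk at time `k`. -/
def walkS (m k : ℕ) (ω : Fin (2*m) → Bool) : ℤ :=
  ∑ i : Fin (2*m), if (i : ℕ) < k then (if ω i then 1 else -1) else 0

/-- The maximum `M_n = max_{0 ≤ k ≤ n} S_k` of the walk up to time `n = 2m`. -/
noncomputable def walkMax (m : ℕ) (ω : Fin (2*m) → Bool) : ℤ :=
  Finset.sup' (Finset.range (2*m+1)) (Finset.nonempty_range_iff.mpr (Nat.succ_ne_zero _))
    (fun k => walkS m k ω)

/-- `W = M_n / √n` with `n = 2m`. -/
noncomputable def walkW (m : ℕ) (ω : Fin (2*m) → Bool) : ℝ :=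
  (walkMax m ω : ℝ) / Real.sqrt (2*m)

/-- `V = 2 N_n / √n` where `N_n = ⌊(M_n+1)/2⌋` and `n = 2m`. -/
noncomputable def walkV (m : ℕ) (ω : Fin (2*m) → Bool) : ℝ :=
  2 * (((walkMax m ω + 1) / 2 : ℤ) : ℝ) / Real.sqrt (2*m)

lemma walkS_zero (m : ℕ) (ω : Fin (2*m) → Bool) : walkS m 0 ω = 0 := by
  simp [walkS]

def wstep (m k : ℕ) (ω : Fin (2*m) → Bool) : ℤ :=
  if hk : k < 2*m then (if ω ⟨k, hk⟩ then 1 else -1) else 0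

lemma walkS_succ (m k : ℕ) (ω : Fin (2*m) → Bool) :
    walkS m (k+1) ω = walkS m k ω + wstep m k ω := by
  unfold walkS
  have : ∀ i : Fin (2*m),
      (if (i:ℕ) < k+1 then (if ω i then (1:ℤ) else -1) else 0)
      = (if (i:ℕ) < k then (if ω i then (1:ℤ) else -1) else 0)
        + (if (i:ℕ) = k then (if ω i then (1:ℤ) else -1) else 0) := by
    intro i
    by_cases h1 : (i:ℕ) < k
    · simp [h1, Nat.lt_succ_of_lt h1, (Nat.ne_of_lt h1)]
    · by_cases h2 : (i:ℕ) = k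
      · simp [h1, h2]
      · have : ¬ (i:ℕ) < k+1 := by omega
        simp [h1, h2, this]
  rw [Finset.sum_congr rfl (fun i _ => this i), Finset.sum_add_distrib]
  congr 1
  unfold wstep
  by_cases hk : k < 2*m
  · rw [dif_pos hk]
    rw [Finset.sum_eq_single (⟨k, hk⟩ : Fin (2*m))]
    · simp
    · intro b _ hb
      have : (b:ℕ) ≠ k := fun h => hb (Fin.ext h)
      simp [this]
    · simp
  · rw [dif_neg hk]
    apply Finset.sum_eq_zero
    intro i _
    have : (i:ℕ) ≠ k := by have := i.isLt; omega
    simp [this]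

lemma wstep_abs (m k : ℕ) (ω : Fin (2*m) → Bool) : |wstep m k ω| ≤ 1 := by
  unfold wstep
  by_cases hk : k < 2*m
  · rw [dif_pos hk]; by_cases h : ω ⟨k, hk⟩ <;> simp [h]
  · rw [dif_neg hk]; norm_num

lemma walkS_congr (m k : ℕ) {ω ω' : Fin (2*m) → Bool}
    (h : ∀ i : Fin (2*m), (i:ℕ) < k → ω i = ω' i) : walkS m k ω = walkS m k ω' := by
  unfold walkS
  refine Finset.sum_congr rfl (fun i _ => ?_)
  by_cases hi : (i:ℕ) < k
  · simp [hi, h i hi]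
  · simp [hi]

/-- Intermediate value: the walk hits every integer between 0 and S k. -/
lemma walkS_ivt (m : ℕ) (ω : Fin (2*m) → Bool) (c : ℤ) :
    ∀ k : ℕ, 0 ≤ c → c ≤ walkS m k ω → ∃ j ≤ k, walkS m j ω = c := by
  intro k
  induction k with
  | zero => intro h0 h1; exact ⟨0, le_refl 0, by rw [walkS_zero] at h1 ⊢; omega⟩
  | succ k ih =>
    intro h0 h1
    by_cases hc : c ≤ walkS m k ω
    · obtain ⟨j, hj, hjc⟩ := ih h0 hc
      exact ⟨j, Nat.le_succ_of_le hj, hjc⟩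
    · refine ⟨k+1, le_refl _, ?_⟩
      have hs := walkS_succ m k ω
      have := wstep_abs m k ω
      rw [abs_le] at this
      omega

lemma walkMax_ge_iff (m : ℕ) (ω : Fin (2*m) → Bool) (r : ℤ) (hr : 0 ≤ r) :
    r ≤ walkMax m ω ↔ ∃ k ≤ 2*m, walkS m k ω = r := by
  constructor
  · intro h
    obtain ⟨k0, hk0, hmax⟩ := Finset.exists_mem_eq_sup'
      (Finset.nonempty_range_iff.mpr (Nat.succ_ne_zero _)) (fun k => walkS m k ω)
    rw [walkMax, hmax] at h
    obtain ⟨j, hj, hjc⟩ := walkS_ivt m ω r k0 hr h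
    exact ⟨j, by simp only [Finset.mem_range] at hk0; omega, hjc⟩
  · rintro ⟨k, hk, hkr⟩
    rw [← hkr]
    exact Finset.le_sup' (fun j => walkS m j ω) (Finset.mem_range.mpr (by omega))

lemma walkMax_nonneg (m : ℕ) (ω : Fin (2*m) → Bool) : 0 ≤ walkMax m ω := by
  have := Finset.le_sup' (fun k => walkS m k ω) (Finset.mem_range.mpr (Nat.succ_pos (2*m)))
  rw [walkS_zero] at this
  exact this

lemma walkS_even (m : ℕ) (ω : Fin (2*m) → Bool) :
    walkS m (2*m) ω = 2 * ((Finset.univ.filter (fun i => ω i)).card : ℤ) - 2*m := by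
  unfold walkS
  have : ∀ i : Fin (2*m), (if (i:ℕ) < 2*m then (if ω i then (1:ℤ) else -1) else 0)
      = (if ω i then (2:ℤ) else 0) - 1 := by
    intro i
    simp [i.isLt]
    by_cases h : ω i <;> simp [h]
  rw [Finset.sum_congr rfl (fun i _ => this i), Finset.sum_sub_distrib]
  classical
  rw [← Finset.sum_filter, Finset.sum_const, Finset.sum_const]
  simp [mul_comm]

open Classical in
/-- First hitting time of level `r` (junk value 0 if never hit). -/
noncomputable def hitT (m : ℕ) (r : ℤ) (ω : Fin (2*m) → Bool) : ℕ :=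
  if h : ∃ k, k ≤ 2*m ∧ walkS m k ω = r then Nat.find h else 0

/-- Reflection of the path after the first hitting time of `r`. -/
noncomputable def wrefl (m : ℕ) (r : ℤ) (ω : Fin (2*m) → Bool) : Fin (2*m) → Bool :=
  fun i => if (i:ℕ) < hitT m r ω then ω i else !(ω i)

section Reflection
variable {m : ℕ} {r : ℤ} {ω : Fin (2*m) → Bool}

lemma hitT_spec (h : ∃ k, k ≤ 2*m ∧ walkS m k ω = r) :
    hitT m r ω ≤ 2*m ∧ walkS m (hitT m r ω) ω = r := by
  rw [hitT, dif_pos h]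
  exact Nat.find_spec h

lemma hitT_min (h : ∃ k, k ≤ 2*m ∧ walkS m k ω = r) {k : ℕ} (hk : k < hitT m r ω) :
    walkS m k ω ≠ r := by
  rw [hitT, dif_pos h] at hk
  have h1 : Nat.find h ≤ 2*m := (Nat.find_spec h).1
  exact fun hc => Nat.find_min h hk ⟨by omega, hc⟩

lemma walkS_wrefl_le (k : ℕ) (hk : k ≤ hitT m r ω) :
    walkS m k (wrefl m r ω) = walkS m k ω := by
  apply walkS_congr
  intro i hi
  rw [wrefl, if_pos (by omega)]

lemma walkS_wrefl_ge (h : ∃ k, k ≤ 2*m ∧ walkS m k ω = r) :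
    ∀ k, hitT m r ω ≤ k → walkS m k (wrefl m r ω) + walkS m k ω = 2*r := by
  intro k hk
  induction k, hk using Nat.le_induction with
  | base =>
    rw [walkS_wrefl_le _ (le_refl _), (hitT_spec h).2]; ring
  | succ k hk ih =>
    rw [walkS_succ, walkS_succ]
    have hstep : wstep m k (wrefl m r ω) = - wstep m k ω := by
      unfold wstep
      by_cases h2 : k < 2*m
      · rw [dif_pos h2, dif_pos h2]
        have : wrefl m r ω ⟨k, h2⟩ = !(ω ⟨k, h2⟩) := by
          rw [wrefl, if_neg (by simp; omega)]
        rw [this]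
        by_cases hb : ω ⟨k, h2⟩ <;> simp [hb]
      · rw [dif_neg h2, dif_neg h2]; ring
    omega

lemma wrefl_hit (h : ∃ k, k ≤ 2*m ∧ walkS m k ω = r) :
    ∃ k, k ≤ 2*m ∧ walkS m k (wrefl m r ω) = r :=
  ⟨hitT m r ω, (hitT_spec h).1, by rw [walkS_wrefl_le _ (le_refl _)]; exact (hitT_spec h).2⟩

lemma hitT_wrefl (h : ∃ k, k ≤ 2*m ∧ walkS m k ω = r) :
    hitT m r (wrefl m r ω) = hitT m r ω := by
  have h' := wrefl_hit h
  apply le_antisymm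
  · rw [hitT, dif_pos h']
    exact Nat.find_le ⟨(hitT_spec h).1, by rw [walkS_wrefl_le _ (le_refl _)]; exact (hitT_spec h).2⟩
  · by_contra hc
    push_neg at hc
    have hs := (hitT_spec h').2
    rw [walkS_wrefl_le _ (le_of_lt hc)] at hs
    exact hitT_min h hc hs

lemma wrefl_wrefl (h : ∃ k, k ≤ 2*m ∧ walkS m k ω = r) :
    wrefl m r (wrefl m r ω) = ω := by
  funext i
  rw [wrefl, wrefl, hitT_wrefl h]
  by_cases hi : (i:ℕ) < hitT m r ω
  · simp only [if_pos hi]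
  · simp only [if_neg hi, Bool.not_not]

end Reflection

/-- Reflection principle: paths that hit `r` and end below `r` correspond to paths ending above `r`. -/
lemma reflection_count (m : ℕ) (r : ℤ) (hr : 0 ≤ r) :
    ({ω : Fin (2*m) → Bool | (∃ k ≤ 2*m, walkS m k ω = r) ∧ walkS m (2*m) ω < r}).ncard
      = ({ω : Fin (2*m) → Bool | r < walkS m (2*m) ω}).ncard := by
  set A := {ω : Fin (2*m) → Bool | (∃ k ≤ 2*m, walkS m k ω = r) ∧ walkS m (2*m) ω < r}
  set B := {ω : Fin (2*m) → Bool | r < walkS m (2*m) ω}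
  have hBhit : ∀ ω ∈ B, ∃ k, k ≤ 2*m ∧ walkS m k ω = r := by
    intro ω hω
    obtain ⟨j, hj, hjr⟩ := walkS_ivt m ω r (2*m) hr (le_of_lt hω)
    exact ⟨j, hj, hjr⟩
  have hAhit : ∀ ω ∈ A, ∃ k, k ≤ 2*m ∧ walkS m k ω = r := by
    intro ω hω
    obtain ⟨⟨k, hk, hkr⟩, _⟩ := hω
    exact ⟨k, hk, hkr⟩
  have hmapsAB : ∀ ω ∈ A, wrefl m r ω ∈ B := by
    intro ω hω
    have h := hAhit ω hω
    have := walkS_wrefl_ge h (2*m) (hitT_spec h).1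
    have h2 := hω.2
    simp only [B, Set.mem_setOf_eq]
    omega
  have hmapsBA : ∀ ω ∈ B, wrefl m r ω ∈ A := by
    intro ω hω
    have h := hBhit ω hω
    have := walkS_wrefl_ge h (2*m) (hitT_spec h).1
    have h2 : r < walkS m (2*m) ω := hω
    refine Set.mem_setOf.mpr ⟨?_, ?_⟩
    · obtain ⟨k, hk, hkr⟩ := wrefl_hit h
      exact ⟨k, hk, hkr⟩
    · omega
  have hbij : Set.BijOn (wrefl m r) A B := by
    refine ⟨hmapsAB, ?_, ?_⟩
    · intro ω1 h1 ω2 h2 he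
      have := congrArg (wrefl m r) he
      rwa [wrefl_wrefl (hAhit ω1 h1), wrefl_wrefl (hAhit ω2 h2)] at this
    · intro ω hω
      exact ⟨wrefl m r ω, hmapsBA ω hω, wrefl_wrefl (hBhit ω hω)⟩
  rw [← hbij.image_eq, Set.ncard_image_of_injOn hbij.injOn]

lemma endpoint_ncard_le (m : ℕ) (s : ℤ) :
    ({ω : Fin (2*m) → Bool | walkS m (2*m) ω = s}).ncard ≤ Nat.choose (2*m) m := by
  classical
  set E := {ω : Fin (2*m) → Bool | walkS m (2*m) ω = s} with hE
  rcases Set.eq_empty_or_nonempty E with h | ⟨ω₀, hω₀⟩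
  · simp [h]
  set j := (Finset.univ.filter (fun i => ω₀ i)).card with hj
  have hcard : ∀ ω ∈ E, (Finset.univ.filter (fun i => ω i)).card = j := by
    intro ω hω
    have h1 := walkS_even m ω
    have h2 := walkS_even m ω₀
    rw [hE, Set.mem_setOf_eq] at hω hω₀
    omega
  have hle : E.ncard ≤ (Finset.powersetCard j (Finset.univ : Finset (Fin (2*m)))).card := by
    rw [← Set.ncard_coe_finset]
    apply Set.ncard_le_ncard_of_injOn (fun ω => Finset.univ.filter (fun i => ω i))
    · intro ω hω
      rw [Finset.mem_coe, Finset.mem_powersetCard]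
      exact ⟨Finset.subset_univ _, hcard ω hω⟩
    · intro ω1 _ ω2 _ he
      funext i
      have hmem := Finset.ext_iff.mp he i
      simp only [Finset.mem_filter, Finset.mem_univ, true_and] at hmem
      by_cases h1 : ω1 i <;> by_cases h2 : ω2 i <;> simp_all
  calc E.ncard ≤ (Finset.powersetCard j (Finset.univ : Finset (Fin (2*m)))).card := hle
    _ = Nat.choose (2*m) j := by rw [Finset.card_powersetCard, Finset.card_univ, Fintype.card_fin]
    _ ≤ Nat.choose (2*m) ((2*m)/2) := Nat.choose_le_middle j (2*m)
    _ = Nat.choose (2*m) m := by congr 1; omega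

lemma seq_empty_of_odd (m : ℕ) (r : ℤ) (hr : Odd r) :
    {ω : Fin (2*m) → Bool | walkS m (2*m) ω = r} = ∅ := by
  ext ω
  simp only [Set.mem_setOf_eq, Set.mem_empty_iff_false, iff_false]
  have h := walkS_even m ω
  obtain ⟨t, ht⟩ := hr
  omega

lemma hit_ncard (m : ℕ) (r : ℤ) (hr : 0 ≤ r) :
    ({ω : Fin (2*m) → Bool | ∃ k ≤ 2*m, walkS m k ω = r}).ncard
      = 2 * ({ω : Fin (2*m) → Bool | r < walkS m (2*m) ω}).ncard
        + ({ω : Fin (2*m) → Bool | walkS m (2*m) ω = r}).ncard := by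
  classical
  set H := {ω : Fin (2*m) → Bool | ∃ k ≤ 2*m, walkS m k ω = r}
  set G := {ω : Fin (2*m) → Bool | r < walkS m (2*m) ω}
  set Q := {ω : Fin (2*m) → Bool | walkS m (2*m) ω = r}
  set L := {ω : Fin (2*m) → Bool | (∃ k ≤ 2*m, walkS m k ω = r) ∧ walkS m (2*m) ω < r}
  have hGH : G ⊆ H := by
    intro ω hω
    obtain ⟨j, hj, hjr⟩ := walkS_ivt m ω r (2*m) hr (le_of_lt hω)
    exact ⟨j, hj, hjr⟩
  have hQH : Q ⊆ H := fun ω hω => ⟨2*m, le_refl _, hω⟩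
  have hsplit : H = G ∪ (Q ∪ L) := by
    ext ω
    constructor
    · intro hω
      rcases lt_trichotomy r (walkS m (2*m) ω) with h | h | h
      · exact Or.inl h
      · exact Or.inr (Or.inl h.symm)
      · exact Or.inr (Or.inr ⟨hω, h⟩)
    · rintro (h | h | h)
      · exact hGH h
      · exact hQH h
      · exact h.1
  have hd1 : Disjoint Q L := by
    rw [Set.disjoint_left]
    rintro ω h1 h2
    rw [Set.mem_setOf_eq] at h1
    have := h2.2
    omega
  have hd2 : Disjoint G (Q ∪ L) := by
    rw [Set.disjoint_left]
    rintro ω h1 (h2 | h2)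
    · rw [Set.mem_setOf_eq] at h1 h2; omega
    · have := h2.2; rw [Set.mem_setOf_eq] at h1; omega
  rw [hsplit, Set.ncard_union_eq hd2, Set.ncard_union_eq hd1, reflection_count m r hr]
  ring

lemma max_ncard (m : ℕ) (r : ℤ) (hr : 1 ≤ r) (hodd : Odd r) :
    ({ω : Fin (2*m) → Bool | walkMax m ω = r}).ncard
      = ({ω : Fin (2*m) → Bool | walkS m (2*m) ω = r + 1}).ncard := by
  classical
  have h0 : (0:ℤ) ≤ r := by omega
  have h1 : (0:ℤ) ≤ r + 1 := by omega
  have hMeq : {ω : Fin (2*m) → Bool | walkMax m ω = r}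
      = {ω : Fin (2*m) → Bool | ∃ k ≤ 2*m, walkS m k ω = r}
        \ {ω : Fin (2*m) → Bool | ∃ k ≤ 2*m, walkS m k ω = r + 1} := by
    ext ω
    simp only [Set.mem_setOf_eq, Set.mem_diff]
    rw [← walkMax_ge_iff m ω r h0, ← walkMax_ge_iff m ω (r+1) h1]
    omega
  have hsub : {ω : Fin (2*m) → Bool | ∃ k ≤ 2*m, walkS m k ω = r + 1}
      ⊆ {ω : Fin (2*m) → Bool | ∃ k ≤ 2*m, walkS m k ω = r} := by
    intro ω hω
    rw [Set.mem_setOf_eq, ← walkMax_ge_iff m ω (r+1) h1] at hω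
    rw [Set.mem_setOf_eq, ← walkMax_ge_iff m ω r h0]
    omega
  have hdiff := Set.ncard_diff_add_ncard_of_subset hsub
  have hh1 := hit_ncard m r h0
  have hh2 := hit_ncard m (r+1) h1
  have hgt : ({ω : Fin (2*m) → Bool | r < walkS m (2*m) ω}).ncard
      = ({ω : Fin (2*m) → Bool | walkS m (2*m) ω = r + 1}).ncard
        + ({ω : Fin (2*m) → Bool | r + 1 < walkS m (2*m) ω}).ncard := by
    have heq : {ω : Fin (2*m) → Bool | r < walkS m (2*m) ω}
        = {ω : Fin (2*m) → Bool | walkS m (2*m) ω = r + 1}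
          ∪ {ω : Fin (2*m) → Bool | r + 1 < walkS m (2*m) ω} := by
      ext ω
      simp only [Set.mem_setOf_eq, Set.mem_union]
      omega
    rw [heq, Set.ncard_union_eq]
    rw [Set.disjoint_left]
    intro ω hω1 hω2
    rw [Set.mem_setOf_eq] at hω1 hω2
    omega
  have hq : ({ω : Fin (2*m) → Bool | walkS m (2*m) ω = r}).ncard = 0 := by
    rw [seq_empty_of_odd m r hodd, Set.ncard_empty]
  rw [hMeq]
  omega

lemma sqrt_pi_le_stirlingSeq (n : ℕ) (hn : n ≠ 0) :
    Real.sqrt Real.pi ≤ Stirling.stirlingSeq n := by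
  obtain ⟨n', rfl⟩ := Nat.exists_eq_succ_of_ne_zero hn
  refine le_of_tendsto Stirling.tendsto_stirlingSeq_sqrt_pi ?_
  filter_upwards [Filter.eventually_ge_atTop (n' + 1)] with k hk
  obtain ⟨k', rfl⟩ := Nat.exists_eq_succ_of_ne_zero (show k ≠ 0 by omega)
  have := Stirling.stirlingSeq'_antitone (show n' ≤ k' by omega)
  simpa [Function.comp, Nat.succ_eq_add_one] using this

lemma stirling_fact (n : ℕ) (hn : 0 < n) :
    (Nat.factorial n : ℝ) = Stirling.stirlingSeq n * (Real.sqrt (2*n) * ((n:ℝ)/Real.exp 1)^n) := by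
  have hd : (0:ℝ) < Real.sqrt (2*n) * ((n:ℝ)/Real.exp 1)^n := by
    apply mul_pos
    · apply Real.sqrt_pos.mpr
      have : (0:ℝ) < (n:ℝ) := by exact_mod_cast hn
      linarith
    · apply pow_pos
      apply div_pos (by exact_mod_cast hn) (Real.exp_pos 1)
  rw [Stirling.stirlingSeq, div_mul_cancel₀ _ (ne_of_gt hd)]

lemma central_binom_bound (m : ℕ) (hm : 0 < m) :
    (Nat.choose (2*m) m : ℝ) * Real.sqrt (Real.pi * m) ≤ 4 ^ m := by
  set a := Stirling.stirlingSeq m with ha_def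
  set b := Stirling.stirlingSeq (2*m) with hb_def
  have hπ : (0:ℝ) < Real.sqrt Real.pi := Real.sqrt_pos.mpr Real.pi_pos
  have ha : Real.sqrt Real.pi ≤ a := sqrt_pi_le_stirlingSeq m (by omega)
  have hb : Real.sqrt Real.pi ≤ b := sqrt_pi_le_stirlingSeq (2*m) (by omega)
  have hba : b ≤ a := by
    obtain ⟨m', rfl⟩ := Nat.exists_eq_succ_of_ne_zero (show m ≠ 0 by omega)
    have h2 : 2 * (m' + 1) = (2*m' + 1) + 1 := by ring
    rw [hb_def, h2]
    have := Stirling.stirlingSeq'_antitone (show m' ≤ 2*m' + 1 by omega)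
    simpa [Function.comp, Nat.succ_eq_add_one] using this
  have hapos : (0:ℝ) < a := lt_of_lt_of_le hπ ha
  have hbpos : (0:ℝ) < b := lt_of_lt_of_le hπ hb
  have hmpos : (0:ℝ) < (m:ℝ) := by exact_mod_cast hm
  set u := Real.sqrt (m:ℝ) with hu_def
  have hupos : (0:ℝ) < u := Real.sqrt_pos.mpr hmpos
  have hu2 : u * u = (m:ℝ) := Real.mul_self_sqrt (le_of_lt hmpos)
  set t := ((m:ℝ)/Real.exp 1)^m with ht_def
  have htpos : (0:ℝ) < t := pow_pos (div_pos hmpos (Real.exp_pos 1)) m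
  -- simplify pieces
  have hs2m : Real.sqrt (2*(m:ℝ)) = Real.sqrt 2 * u := by
    rw [hu_def, ← Real.sqrt_mul (by norm_num : (0:ℝ) ≤ 2)]
  have hs4m : Real.sqrt (2*((2*m : ℕ):ℝ)) = 2 * u := by
    push_cast
    rw [show (2:ℝ) * (2 * m) = 2^2 * m by ring,
      Real.sqrt_mul (by norm_num : (0:ℝ) ≤ 2^2), Real.sqrt_sq (by norm_num : (0:ℝ) ≤ 2), hu_def]
  have h2mpow : (((2*m : ℕ):ℝ)/Real.exp 1)^(2*m) = 4^m * t * t := by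
    rw [ht_def]
    push_cast
    rw [show ((2:ℝ)*m/Real.exp 1) = 2 * ((m:ℝ)/Real.exp 1) by ring, mul_pow,
      pow_mul, pow_mul]
    norm_num
    ring
  -- factorial identities
  have hfm := stirling_fact m hm
  have hf2m := stirling_fact (2*m) (show 0 < 2*m by omega)
  rw [← ha_def, ← ht_def, hs2m] at hfm
  rw [← hb_def, hs4m, h2mpow] at hf2m
  have hchoose : (Nat.choose (2*m) m : ℝ) * ((Nat.factorial m : ℝ) * (Nat.factorial m : ℝ)) = (Nat.factorial (2*m) : ℝ) := by
    have h := Nat.choose_mul_factorial_mul_factorial (show m ≤ 2*m by omega)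
    have h2 : 2*m - m = m := by omega
    rw [h2] at h
    exact_mod_cast congrArg (Nat.cast : ℕ → ℝ) (by rw [← h]; ring)
  have key : (Nat.choose (2*m) m : ℝ) * a^2 * m = b * u * 4^m := by
    rw [hfm, hf2m] at hchoose
    have hs2 : Real.sqrt 2 * Real.sqrt 2 = 2 := Real.mul_self_sqrt (by norm_num)
    have h2 : ((Nat.choose (2*m) m : ℝ) * a^2 * m) * (2 * (t*t)) = (b * u * 4^m) * (2 * (t*t)) := by
      linear_combination hchoose - ((Nat.choose (2*m) m : ℝ) * a^2 * t * t * u * u) * hs2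
        - 2*(Nat.choose (2*m) m : ℝ)*a^2*t*t * hu2
    exact mul_right_cancel₀ (by positivity) h2
  have hsqrtpm : Real.sqrt (Real.pi * m) = Real.sqrt Real.pi * u := by
    rw [hu_def, ← Real.sqrt_mul Real.pi_pos.le]
  rw [hsqrtpm]
  have h4pos : (0:ℝ) < 4^m := by positivity
  -- suffices to multiply by a^2 * m > 0
  have hmul : (0:ℝ) < a^2 * m := by positivity
  rw [← mul_le_mul_iff_of_pos_right hmul]
  have hlhs : (Nat.choose (2*m) m : ℝ) * (Real.sqrt Real.pi * u) * (a^2 * m)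
      = (Real.sqrt Real.pi * b) * (m * 4^m) := by
    calc (Nat.choose (2*m) m : ℝ) * (Real.sqrt Real.pi * u) * (a^2 * m)
        = ((Nat.choose (2*m) m : ℝ) * a^2 * m) * (Real.sqrt Real.pi * u) := by ring
      _ = (b * u * 4^m) * (Real.sqrt Real.pi * u) := by rw [key]
      _ = (Real.sqrt Real.pi * b) * ((u*u) * 4^m) := by ring
      _ = (Real.sqrt Real.pi * b) * (m * 4^m) := by rw [hu2]
  rw [hlhs]
  have hab : Real.sqrt Real.pi * b ≤ a^2 := by nlinarith
  calc (Real.sqrt Real.pi * b) * (m * 4^m) ≤ a^2 * (m * 4^m) := by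
        apply mul_le_mul_of_nonneg_right hab (by positivity)
    _ = 4^m * (a^2 * m) := by ring

lemma walkP_toReal (m : ℕ) (A : Set (Fin (2*m) → Bool)) :
    (walkP m A).toReal = (A.ncard : ℝ) / 4 ^ m := by
  classical
  rw [walkP, PMF.toMeasure_uniformOfFintype_apply A (A.to_countable.measurableSet),
    ENNReal.toReal_div]
  rw [ENNReal.toReal_natCast, ENNReal.toReal_natCast]
  congr 1
  · rw [← Nat.card_coe_set_eq, Nat.card_eq_fintype_card]
  · have h1 : Fintype.card (Fin (2*m) → Bool) = 2 ^ (2*m) := by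
      rw [Fintype.card_fun, Fintype.card_fin, Fintype.card_bool]
    rw [h1]
    rw [show (2:ℕ)^(2*m) = 4^m by rw [pow_mul]; norm_num]
    push_cast
    ring

lemma walkN_bounds (m : ℕ) (ω : Fin (2*m) → Bool) :
    (walkMax m ω : ℝ) ≤ 2 * (((walkMax m ω + 1) / 2 : ℤ) : ℝ)
      ∧ 2 * (((walkMax m ω + 1) / 2 : ℤ) : ℝ) ≤ (walkMax m ω : ℝ) + 1 := by
  constructor
  · exact_mod_cast (show (walkMax m ω) ≤ 2 * ((walkMax m ω + 1) / 2) by omega)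
  · exact_mod_cast (show 2 * ((walkMax m ω + 1) / 2) ≤ walkMax m ω + 1 by omega)

lemma walkW_le_walkV (m : ℕ) (hm : 0 < m) (ω : Fin (2*m) → Bool) :
    walkW m ω ≤ walkV m ω ∧ walkV m ω ≤ walkW m ω + 1 / Real.sqrt (2*m) := by
  have hs : (0:ℝ) < Real.sqrt (2*m) := by
    apply Real.sqrt_pos.mpr
    have : (0:ℝ) < (m:ℝ) := by exact_mod_cast hm
    linarith
  obtain ⟨h1, h2⟩ := walkN_bounds m ω
  constructor
  · rw [walkW, walkV]
    exact div_le_div_of_nonneg_right h1 hs.le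
  · rw [walkV, walkW, ← add_div]
    exact div_le_div_of_nonneg_right h2 hs.le

theorem stmt19 (m : ℕ) (hm : 0 < m) :
    (∀ z : ℝ,
        |(walkP m {ω | walkV m ω ≤ z}).toReal - (walkP m {ω | walkW m ω ≤ z}).toReal| ≤
          Real.sqrt (2 / Real.pi) / Real.sqrt (2*m)) ∧
    (∀ h : ℝ → ℝ, LipschitzWith 1 h →
        |(∫ ω, h (walkV m ω) ∂(walkP m)) - ∫ ω, h (walkW m ω) ∂(walkP m)| ≤
          1 / Real.sqrt (2*m)) := by
  classical
  have hs : (0:ℝ) < Real.sqrt (2*m) := by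
    apply Real.sqrt_pos.mpr
    have : (0:ℝ) < (m:ℝ) := by exact_mod_cast hm
    linarith
  constructor
  · -- Kolmogorov distance
    intro z
    set A := {ω : Fin (2*m) → Bool | walkV m ω ≤ z} with hA
    set B := {ω : Fin (2*m) → Bool | walkW m ω ≤ z} with hB
    have hAB : A ⊆ B := fun ω hω =>
      le_trans (walkW_le_walkV m hm ω).1 hω
    -- |P A - P B| = ncard (B \ A) / 4^m
    rw [walkP_toReal, walkP_toReal]
    have hcard := Set.ncard_diff_add_ncard_of_subset hAB
    have habs : |(A.ncard : ℝ) / 4 ^ m - (B.ncard : ℝ) / 4 ^ m| = ((B \ A).ncard : ℝ) / 4 ^ m := by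
      rw [abs_sub_comm, div_sub_div_same, abs_div, abs_of_nonneg (show (0:ℝ) ≤ (4:ℝ)^m by positivity)]
      congr 1
      rw [show (B.ncard : ℝ) - A.ncard = ((B \ A).ncard : ℝ) by
        rw [← hcard]; push_cast; ring]
      rw [abs_of_nonneg (by positivity)]
    rw [habs]
    -- the difference set forces M = ⌊z √(2m)⌋, odd, ≥ 1
    set r : ℤ := ⌊z * Real.sqrt (2*m)⌋ with hr
    have hsub : B \ A ⊆ {ω | walkMax m ω = r} ∩ {ω | Odd r ∧ 1 ≤ r} := by
      intro ω hω
      obtain ⟨hωB, hωA⟩ := hω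
      have hW : (walkMax m ω : ℝ) / Real.sqrt (2*m) ≤ z := hωB
      have hV : ¬ (2 * (((walkMax m ω + 1) / 2 : ℤ) : ℝ) / Real.sqrt (2*m) ≤ z) := hωA
      push_neg at hV
      rw [div_le_iff₀ hs] at hW
      rw [lt_div_iff₀ hs] at hV
      obtain ⟨h1, h2⟩ := walkN_bounds m ω
      -- M ≤ z√n < 2N ≤ M + 1
      have hfloor : (walkMax m ω : ℝ) ≤ z * Real.sqrt (2*m)
          ∧ z * Real.sqrt (2*m) < (walkMax m ω : ℝ) + 1 := ⟨hW, lt_of_lt_of_le hV h2⟩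
      have hMr : walkMax m ω = r := by
        rw [hr]
        symm
        rw [Int.floor_eq_iff]
        exact_mod_cast hfloor
      have h2N : 2 * ((walkMax m ω + 1) / 2 : ℤ) = walkMax m ω + 1 := by
        have : (walkMax m ω : ℝ) < 2 * (((walkMax m ω + 1) / 2 : ℤ) : ℝ) := lt_of_le_of_lt hW hV
        have h3 : (walkMax m ω) < 2 * ((walkMax m ω + 1) / 2 : ℤ) := by exact_mod_cast this
        omega
      have hodd : Odd r := by
        rw [← hMr]
        exact ⟨(walkMax m ω + 1) / 2 - 1 + 1 - 1, by omega⟩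
      have hge : 1 ≤ r := by
        rw [← hMr]
        have := walkMax_nonneg m ω
        obtain ⟨t, ht⟩ := hodd
        rw [← hMr] at ht
        omega
      exact ⟨hMr, hodd, hge⟩
    by_cases hcase : Odd r ∧ 1 ≤ r
    · -- main case
      have hsub2 : B \ A ⊆ {ω | walkMax m ω = r} := fun ω hω => (hsub hω).1
      have hle1 : (B \ A).ncard ≤ ({ω : Fin (2*m) → Bool | walkMax m ω = r}).ncard :=
        Set.ncard_le_ncard hsub2 (Set.toFinite _)
      rw [max_ncard m r hcase.2 hcase.1] at hle1
      have hle2 := endpoint_ncard_le m (r+1)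
      have hle3 : ((B \ A).ncard : ℝ) ≤ (Nat.choose (2*m) m : ℝ) := by
        exact_mod_cast le_trans hle1 hle2
      have hmR : (0:ℝ) < (m:ℝ) := by exact_mod_cast hm
      have hfinal : (Nat.choose (2*m) m : ℝ) / 4^m ≤ Real.sqrt (2 / Real.pi) / Real.sqrt (2*m) := by
        have hcb := central_binom_bound m hm
        have hppos : (0:ℝ) < Real.sqrt (Real.pi * m) :=
          Real.sqrt_pos.mpr (mul_pos Real.pi_pos hmR)
        have heq : Real.sqrt (2 / Real.pi) / Real.sqrt (2*(m:ℝ)) = 1 / Real.sqrt (Real.pi * m) := by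
          rw [Real.sqrt_div (by norm_num : (0:ℝ) ≤ 2) Real.pi,
            Real.sqrt_mul (by norm_num : (0:ℝ) ≤ 2) (m:ℝ),
            Real.sqrt_mul Real.pi_pos.le (m:ℝ)]
          have h2 : Real.sqrt 2 ≠ 0 := by positivity
          have hπ : Real.sqrt Real.pi ≠ 0 := by positivity
          have hmm : Real.sqrt (m:ℝ) ≠ 0 := by positivity
          field_simp
        rw [heq, div_le_div_iff₀ (by positivity) hppos]
        linarith [hcb]
      calc ((B \ A).ncard : ℝ) / 4^m ≤ (Nat.choose (2*m) m : ℝ) / 4^m :=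
            div_le_div_of_nonneg_right hle3 (by positivity)
        _ ≤ Real.sqrt (2 / Real.pi) / Real.sqrt (2*m) := hfinal
    · -- degenerate case : B \ A is empty
      have hempty : B \ A = ∅ := by
        by_contra hne
        obtain ⟨ω, hω⟩ := Set.nonempty_iff_ne_empty.mpr hne
        exact hcase (hsub hω).2
      rw [hempty, Set.ncard_empty, Nat.cast_zero, zero_div]
      positivity
  · -- Wasserstein distance
    intro h hLip
    have hprob : IsProbabilityMeasure (walkP m) := PMF.toMeasure.isProbabilityMeasure _
    have hint1 : Integrable (fun ω => h (walkV m ω)) (walkP m) := .of_finite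
    have hint2 : Integrable (fun ω => h (walkW m ω)) (walkP m) := .of_finite
    rw [← integral_sub hint1 hint2]
    have hbound : ∀ ω, |h (walkV m ω) - h (walkW m ω)| ≤ 1 / Real.sqrt (2*m) := by
      intro ω
      have hlip := hLip.dist_le_mul (walkV m ω) (walkW m ω)
      rw [Real.dist_eq, Real.dist_eq] at hlip
      obtain ⟨h1, h2⟩ := walkW_le_walkV m hm ω
      calc |h (walkV m ω) - h (walkW m ω)| ≤ 1 * |walkV m ω - walkW m ω| := hlip
        _ = |walkV m ω - walkW m ω| := one_mul _
        _ ≤ 1 / Real.sqrt (2*m) := by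
            rw [abs_of_nonneg (by linarith)]
            linarith
    calc |∫ ω, (h (walkV m ω) - h (walkW m ω)) ∂(walkP m)|
        ≤ ∫ ω, |h (walkV m ω) - h (walkW m ω)| ∂(walkP m) := by
          simpa [Real.norm_eq_abs] using
            norm_integral_le_integral_norm (fun ω => h (walkV m ω) - h (walkW m ω)) (μ := walkP m)
      _ ≤ ∫ _ω, 1 / Real.sqrt (2*m) ∂(walkP m) := by
          apply integral_mono (by exact (hint1.sub hint2).abs) (integrable_const _)
          exact hbound
      _ = 1 / Real.sqrt (2*m) := by
          rw [integral_const, probReal_univ, one_smul]
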